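/- For positive real numbers $\pi_1, \dots, \pi_d$ and real numbers $h_1 < h_2 < \dots < h_d$, the Jacobian determinant of the map $\phi : (\pi_1, \dots, \pi_d, h_1, \dots, h_d) \mapsto (\sum_j \pi_j, \sum_j \pi_j h_j, \sum_j \pi_j h_j^2, \dots, \sum_j \pi_j h_j^{2d-1})$ equals $(-1)^{d(d-1)/2} \, \pi_1 \cdots \pi_d \prod_{1 \le j < k \le d} (h_j - h_k)^4$. -/

import Mathlib

open Polynomial Finset Matrix ContinuousLinearMap

/-- auxiliary polynomial: `((c+X)^k - c^k) / X`. -/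
noncomputable def gpoly (c : ℝ) (k : ℕ) : Polynomial ℝ :=
  ∑ m ∈ Finset.range k, C ((k.choose (m+1) : ℝ) * c ^ (k-1-m)) * X ^ m

lemma X_mul_gpoly (c : ℝ) (k : ℕ) :
    X * gpoly c k = (C c + X) ^ k - C c ^ k := by
  rw [add_pow, Finset.sum_range_succ]
  simp only [Nat.choose_self, Nat.cast_one, mul_one, Nat.sub_self, pow_zero]
  rw [add_sub_cancel_right, gpoly, Finset.mul_sum, ← Finset.sum_range_reflect]
  refine Finset.sum_congr rfl fun m hm => ?_
  simp only [Finset.mem_range] at hm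
  have e1 : k - 1 - m + 1 = k - m := by omega
  have e2 : k - 1 - (k - 1 - m) = m := by omega
  have e3 : Nat.choose k (k - m) = Nat.choose k m := Nat.choose_symm (by omega)
  rw [e1, e2, e3]
  rw [show (X : Polynomial ℝ) * (C ((k.choose m : ℝ) * c ^ m) * X ^ (k-1-m))
      = C ((k.choose m : ℝ) * c ^ m) * X ^ (k-1-m+1) by ring]
  rw [e1]
  simp [C_mul, C_pow]
  ring

lemma gpoly_eval_zero (c : ℝ) (k : ℕ) :
    (gpoly c k).eval 0 = k * c ^ (k-1) := by
  rw [gpoly]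
  simp only [eval_finset_sum, eval_mul, eval_C, eval_pow, eval_X]
  rcases Nat.eq_zero_or_pos k with rfl | hk
  · simp
  · rw [Finset.sum_eq_single 0]
    · simp
    · intro m _ hm
      simp [zero_pow hm]
    · intro hh
      simp at hh
      omega

lemma prod_Ioi_ite {R : Type*} [CommMonoid R] {α : Type*} [Fintype α] [LinearOrder α]
    [LocallyFiniteOrderTop α] (i0 : α) (G : α → R) :
    ∏ j ∈ Ioi i0, G j = ∏ j : α, if i0 < j then G j else 1 := by
  rw [← Finset.prod_filter]
  congr 1
  ext j
  simp [Finset.mem_Ioi]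

lemma prod_Ioi_split {R : Type*} [CommRing R] (d : ℕ) (F : Fin (d+d) → Fin (d+d) → R) :
    ∏ i, ∏ j ∈ Ioi i, F i j =
      ((∏ i : Fin d, ∏ j ∈ Ioi i, F (Fin.castAdd d i) (Fin.castAdd d j)) *
       (∏ i : Fin d, ∏ j ∈ Ioi i, F (Fin.natAdd d i) (Fin.natAdd d j))) *
      ∏ i : Fin d, ∏ j : Fin d, F (Fin.castAdd d i) (Fin.natAdd d j) := by
  have hcc : ∀ i j : Fin d, (Fin.castAdd d i < Fin.castAdd d j) ↔ i < j := by
    intro i j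
    simp only [Fin.lt_def, Fin.coe_castAdd]
  have hcn : ∀ i j : Fin d, (Fin.castAdd d i < Fin.natAdd d j) := by
    intro i j; simp only [Fin.lt_def, Fin.coe_castAdd, Fin.coe_natAdd]; omega
  have hnc : ∀ i j : Fin d, ¬ (Fin.natAdd d i < Fin.castAdd d j) := by
    intro i j
    simp only [Fin.lt_def, Fin.coe_castAdd, Fin.coe_natAdd]
    omega
  have hnn : ∀ i j : Fin d, (Fin.natAdd d i < Fin.natAdd d j) ↔ i < j := by
    intro i j
    simp only [Fin.lt_def, Fin.coe_natAdd]
    omega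
  rw [Fin.prod_univ_add (f := fun i => ∏ j ∈ Ioi i, F i j)]
  have h1 : ∀ i : Fin d, ∏ j ∈ Ioi (Fin.castAdd d i), F (Fin.castAdd d i) j
      = (∏ j ∈ Ioi i, F (Fin.castAdd d i) (Fin.castAdd d j)) *
        ∏ j : Fin d, F (Fin.castAdd d i) (Fin.natAdd d j) := by
    intro i
    rw [prod_Ioi_ite, Fin.prod_univ_add (f := fun j => if Fin.castAdd d i < j then F (Fin.castAdd d i) j else 1)]
    congr 1
    · rw [prod_Ioi_ite i]
      exact Finset.prod_congr rfl fun j _ => if_congr (hcc i j) rfl rfl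
    · exact Finset.prod_congr rfl fun j _ => by rw [if_pos (hcn i j)]
  have h2 : ∀ i : Fin d, ∏ j ∈ Ioi (Fin.natAdd d i), F (Fin.natAdd d i) j
      = ∏ j ∈ Ioi i, F (Fin.natAdd d i) (Fin.natAdd d j) := by
    intro i
    rw [prod_Ioi_ite, Fin.prod_univ_add (f := fun j => if Fin.natAdd d i < j then F (Fin.natAdd d i) j else 1)]
    rw [Finset.prod_eq_one (fun j _ => if_neg (hnc i j)), one_mul, prod_Ioi_ite i]
    exact Finset.prod_congr rfl fun j _ => if_congr (hnn i j) rfl rfl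
  simp only [h1, h2, Finset.prod_mul_distrib]
  ring

variable (d : ℕ)

noncomputable def Dmap (w h : Fin d → ℝ) (e : ℕ) :
    ((Fin d → ℝ) × (Fin d → ℝ)) →L[ℝ] ℝ :=
  ∑ i : Fin d,
    (w i • ((e * h i ^ (e-1)) • ((proj i).comp (snd ℝ (Fin d → ℝ) (Fin d → ℝ)))) +
     (h i ^ e) • ((proj i).comp (fst ℝ (Fin d → ℝ) (Fin d → ℝ))))

lemma hasFDerivAt_moment (w h : Fin d → ℝ) (e : ℕ) :
    HasFDerivAt (fun x : (Fin d → ℝ) × (Fin d → ℝ) => ∑ i, x.1 i * x.2 i ^ e)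
      (Dmap d w h e) (w, h) := by
  apply HasFDerivAt.fun_sum
  intro i _
  have h1 : HasFDerivAt (fun x : (Fin d → ℝ) × (Fin d → ℝ) => x.1 i)
      ((proj i).comp (fst ℝ (Fin d → ℝ) (Fin d → ℝ))) (w, h) :=
    ((proj i).comp (fst ℝ (Fin d → ℝ) (Fin d → ℝ))).hasFDerivAt
  have h2 : HasFDerivAt (fun x : (Fin d → ℝ) × (Fin d → ℝ) => x.2 i)
      ((proj i).comp (snd ℝ (Fin d → ℝ) (Fin d → ℝ))) (w, h) :=
    ((proj i).comp (snd ℝ (Fin d → ℝ) (Fin d → ℝ))).hasFDerivAt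
  have h3 : HasFDerivAt (fun x : (Fin d → ℝ) × (Fin d → ℝ) => x.2 i ^ e)
      ((e * h i ^ (e-1)) • ((proj i).comp (snd ℝ (Fin d → ℝ) (Fin d → ℝ)))) (w, h) :=
    (hasDerivAt_pow e (h i)).comp_hasFDerivAt (w, h) h2
  exact h1.mul h3

noncomputable def Lfull (w h : Fin d → ℝ) :
    ((Fin d → ℝ) × (Fin d → ℝ)) →L[ℝ] ((Fin d → ℝ) × (Fin d → ℝ)) :=
  (ContinuousLinearMap.pi fun k : Fin d => Dmap d w h k).prod
    (ContinuousLinearMap.pi fun k : Fin d => Dmap d w h (d + k))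

lemma hasFDerivAt_full (w h : Fin d → ℝ) :
    HasFDerivAt (fun x : (Fin d → ℝ) × (Fin d → ℝ) =>
        ((fun k : Fin d => ∑ i, x.1 i * x.2 i ^ (k : ℕ)),
         (fun k : Fin d => ∑ i, x.1 i * x.2 i ^ (d + (k : ℕ)))))
      (Lfull d w h) (w, h) :=
  HasFDerivAt.prodMk ((hasFDerivAt_pi (φ' := fun k : Fin d => Dmap d w h k)).2
      fun k => hasFDerivAt_moment d w h k)
    ((hasFDerivAt_pi (φ' := fun k : Fin d => Dmap d w h (d + k))).2
      fun k => hasFDerivAt_moment d w h (d + k))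

noncomputable def Bb := (Pi.basisFun ℝ (Fin d)).prod (Pi.basisFun ℝ (Fin d))

def exm : Fin d ⊕ Fin d → ℕ := Sum.elim (fun k => (k : ℕ)) (fun k => d + (k : ℕ))

lemma toMatrix_Lfull (w h : Fin d → ℝ) :
    LinearMap.toMatrix (Bb d) (Bb d) (Lfull d w h).toLinearMap
      = Matrix.of fun r c =>
          Sum.elim (fun a => h a ^ exm d r)
            (fun a => w a * ((exm d r) * h a ^ (exm d r - 1))) c := by
  ext r c
  rw [LinearMap.toMatrix_apply]
  cases r <;> cases c <;>
    simp [Bb, Lfull, Dmap, Module.Basis.prod_repr_inl, Module.Basis.prod_repr_inr, exm,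
      Pi.basisFun_repr, Pi.basisFun_apply, Pi.single_apply, mul_ite, mul_one, mul_zero,
      Finset.sum_ite_eq']


lemma exm_symm (r : Fin (d + d)) : exm d (finSumFinEquiv.symm r) = (r : ℕ) := by
  obtain ⟨s, rfl⟩ := finSumFinEquiv.surjective r
  rw [Equiv.symm_apply_apply]
  cases s with
  | inl i => simp [exm, finSumFinEquiv_apply_left]
  | inr i =>
    simp only [exm, finSumFinEquiv_apply_right, Sum.elim_inr, Fin.coe_natAdd]

noncomputable def Bpoly (h : Fin d → ℝ) : Matrix (Fin d ⊕ Fin d) (Fin d ⊕ Fin d) (Polynomial ℝ) :=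
  Matrix.of fun r c =>
    Sum.elim (fun j => C (h j) ^ exm d r) (fun j => gpoly (h j) (exm d r)) c

noncomputable def nodes (h : Fin d → ℝ) : Fin d ⊕ Fin d → Polynomial ℝ :=
  Sum.elim (fun j => C (h j)) (fun j => C (h j) + X)

noncomputable def Apoly (h : Fin d → ℝ) : Matrix (Fin d ⊕ Fin d) (Fin d ⊕ Fin d) (Polynomial ℝ) :=
  Matrix.of fun r c => nodes d h c ^ exm d r

lemma Apoly_eq (h : Fin d → ℝ) :
    Apoly d h = Bpoly d h * Matrix.fromBlocks 1 1 0 ((X : Polynomial ℝ) • 1) := by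
  refine Matrix.ext fun r c => ?_
  rw [Matrix.mul_apply]
  rw [Fintype.sum_sum_type]
  cases c with
  | inl j =>
    simp only [Apoly, Bpoly, nodes, Matrix.of_apply, Sum.elim_inl, Sum.elim_inr,
      Matrix.fromBlocks_apply₁₁, Matrix.fromBlocks_apply₂₁, Matrix.zero_apply, mul_zero,
      Finset.sum_const_zero, add_zero, Matrix.one_apply, mul_ite, mul_one, mul_zero,
      Finset.sum_ite_eq']
    simp
  | inr j =>
    simp only [Apoly, Bpoly, nodes, Matrix.of_apply, Sum.elim_inl, Sum.elim_inr,
      Matrix.fromBlocks_apply₁₂, Matrix.fromBlocks_apply₂₂, Matrix.smul_apply,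
      Matrix.one_apply, mul_ite, mul_one, mul_zero, smul_ite, smul_zero, smul_eq_mul,
      Finset.sum_ite_eq']
    simp only [Finset.mem_univ, if_true]
    rw [show C (h j) ^ exm d r + gpoly (h j) (exm d r) * X
        = X * gpoly (h j) (exm d r) + C (h j) ^ exm d r by ring,
      X_mul_gpoly]
    ring

lemma det_Apoly (h : Fin d → ℝ) :
    (Apoly d h).det =
      ((∏ i : Fin d, ∏ j ∈ Ioi i, (C (h j) - C (h i))) *
       (∏ i : Fin d, ∏ j ∈ Ioi i, (C (h j) - C (h i)))) *
      ∏ i : Fin d, ∏ j : Fin d, (C (h j) + X - C (h i)) := by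
  have : (Apoly d h).det =
      ((Apoly d h).submatrix finSumFinEquiv.symm finSumFinEquiv.symm).det :=
    (Matrix.det_submatrix_equiv_self finSumFinEquiv.symm (Apoly d h)).symm
  rw [this]
  have : (Apoly d h).submatrix finSumFinEquiv.symm finSumFinEquiv.symm =
      (Matrix.vandermonde (fun c : Fin (d+d) => nodes d h (finSumFinEquiv.symm c)))ᵀ := by
    ext r c
    simp [Apoly, Matrix.vandermonde, exm_symm]
  rw [this, Matrix.det_transpose, Matrix.det_vandermonde]
  rw [prod_Ioi_split d (fun i j => nodes d h (finSumFinEquiv.symm j) - nodes d h (finSumFinEquiv.symm i))]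
  have hsc : ∀ x : Fin d, finSumFinEquiv.symm (Fin.castAdd d x) = Sum.inl x :=
    fun x => finSumFinEquiv_symm_apply_castAdd x
  have hsn : ∀ x : Fin d, finSumFinEquiv.symm (Fin.natAdd d x) = Sum.inr x :=
    fun x => finSumFinEquiv_symm_apply_natAdd x
  simp only [hsc, hsn, nodes, Sum.elim_inl, Sum.elim_inr]
  congr 1
  congr 1
  exact Finset.prod_congr rfl fun i _ => Finset.prod_congr rfl fun j _ => by ring

lemma det_Bpoly (h : Fin d → ℝ) :
    (Bpoly d h).det =
      ((∏ i : Fin d, ∏ j ∈ Ioi i, (C (h j) - C (h i))) *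
       (∏ i : Fin d, ∏ j ∈ Ioi i, (C (h j) - C (h i)))) *
      ∏ j : Fin d, ∏ i ∈ Finset.univ.erase j, (C (h j) + X - C (h i)) := by
  have h1 : (Apoly d h).det = (Bpoly d h).det * X ^ d := by
    rw [Apoly_eq, Matrix.det_mul, Matrix.det_fromBlocks_zero₂₁, Matrix.det_one, one_mul,
      Matrix.det_smul, Matrix.det_one, mul_one, Fintype.card_fin]
  have h3 : (∏ i : Fin d, ∏ j : Fin d, (C (h j) + X - C (h i)))
      = X ^ d * ∏ j : Fin d, ∏ i ∈ Finset.univ.erase j, (C (h j) + X - C (h i)) := by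
    rw [Finset.prod_comm]
    have : ∀ j : Fin d, (∏ i : Fin d, (C (h j) + X - C (h i)))
        = X * ∏ i ∈ Finset.univ.erase j, (C (h j) + X - C (h i)) := by
      intro j
      rw [← Finset.mul_prod_erase Finset.univ _ (Finset.mem_univ j)]
      congr 1
      ring
    simp only [this]
    rw [Finset.prod_mul_distrib, Finset.prod_const, Finset.card_univ, Fintype.card_fin]
  have h2 := det_Apoly d h
  rw [h1, h3] at h2
  refine mul_left_cancel₀ (pow_ne_zero d (Polynomial.X_ne_zero (R := ℝ)))
    (b := (Bpoly d h).det)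
    (c := ((∏ i : Fin d, ∏ j ∈ Ioi i, (C (h j) - C (h i))) *
       (∏ i : Fin d, ∏ j ∈ Ioi i, (C (h j) - C (h i)))) *
      ∏ j : Fin d, ∏ i ∈ Finset.univ.erase j, (C (h j) + X - C (h i))) ?_
  rw [show (X : Polynomial ℝ) ^ d * (Bpoly d h).det = (Bpoly d h).det * X ^ d by ring, h2]
  ring

lemma sign_prod (e : ℕ) : (∏ i : Fin e, ∏ _j ∈ Ioi i, (-1 : ℝ)) = (-1 : ℝ) ^ (e * (e - 1) / 2) := by
  have h1 : ∀ i : Fin e, (∏ _j ∈ Ioi i, (-1 : ℝ)) = (-1 : ℝ) ^ (e - 1 - (i : ℕ)) := by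
    intro i
    rw [Finset.prod_const, Fin.card_Ioi]
  simp only [h1]
  rw [Finset.prod_pow_eq_pow_sum]
  congr 1
  rw [Fin.sum_univ_eq_sum_range (fun i => e - 1 - i)]
  rw [Finset.sum_range_reflect (fun i => i) e]
  exact Finset.sum_range_id e

lemma det_J0 (h : Fin d → ℝ) :
    (Matrix.of fun r c => Sum.elim (fun a => h a ^ exm d r)
        (fun a => (exm d r : ℝ) * h a ^ (exm d r - 1)) c :
      Matrix (Fin d ⊕ Fin d) (Fin d ⊕ Fin d) ℝ).det
      = (-1 : ℝ) ^ (d * (d - 1) / 2) * ∏ i, ∏ k ∈ Ioi i, (h i - h k) ^ 4 := by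
  have hmap : (Matrix.of fun r c => Sum.elim (fun a => h a ^ exm d r)
        (fun a => (exm d r : ℝ) * h a ^ (exm d r - 1)) c :
      Matrix (Fin d ⊕ Fin d) (Fin d ⊕ Fin d) ℝ)
      = (Polynomial.evalRingHom (0:ℝ)).mapMatrix (Bpoly d h) := by
    refine Matrix.ext fun r c => ?_
    cases c with
    | inl j => simp [Bpoly]
    | inr j =>
      simp only [RingHom.mapMatrix_apply, Matrix.map_apply, Bpoly, Matrix.of_apply,
        Sum.elim_inr, Polynomial.coe_evalRingHom]
      rw [gpoly_eval_zero]
  rw [hmap, ← RingHom.map_det, det_Bpoly]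
  simp only [_root_.map_mul, map_prod, map_sub, _root_.map_add, Polynomial.coe_evalRingHom,
    Polynomial.eval_C, Polynomial.eval_X, Polynomial.eval_add, Polynomial.eval_sub, add_zero]
  have hQ4 : (∏ j : Fin d, ∏ i ∈ Finset.univ.erase j, (h j - h i))
      = ∏ i : Fin d, ∏ j ∈ Ioi i, ((h i - h j) * (h j - h i)) := by
    have := Finset.prod_prod_Ioi_mul_eq_prod_prod_off_diag (f := fun x y : Fin d => h y - h x)
    simp only [Finset.compl_singleton] at this
    convert this.symm using 2
  rw [hQ4]
  simp only [← Finset.prod_mul_distrib]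
  have : ∀ i : Fin d, ∀ j : Fin d,
      (h j - h i) * (h j - h i) * ((h i - h j) * (h j - h i)) = (-1 : ℝ) * (h i - h j) ^ 4 := by
    intro i j; ring
  calc (∏ i : Fin d, ∏ j ∈ Ioi i, ((h j - h i) * (h j - h i) * ((h i - h j) * (h j - h i))))
      = ∏ i : Fin d, ∏ j ∈ Ioi i, ((-1 : ℝ) * (h i - h j) ^ 4) :=
        Finset.prod_congr rfl fun i _ => Finset.prod_congr rfl fun j _ => this i j
    _ = (∏ i : Fin d, ∏ _j ∈ Ioi i, (-1 : ℝ)) * ∏ i : Fin d, ∏ j ∈ Ioi i, (h i - h j) ^ 4 := by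
        simp only [Finset.prod_mul_distrib]
    _ = (-1 : ℝ) ^ (d * (d - 1) / 2) * ∏ i, ∏ k ∈ Ioi i, (h i - h k) ^ 4 := by
        rw [sign_prod]

theorem stmt_2 (d : ℕ) (hd : 0 < d) (w h : Fin d → ℝ)
    (hw : ∀ i, 0 < w i) (hmono : StrictMono h) :
    LinearMap.det
      ((fderiv ℝ (fun x : (Fin d → ℝ) × (Fin d → ℝ) =>
          ((fun k : Fin d => ∑ i, x.1 i * x.2 i ^ (k : ℕ)),
           (fun k : Fin d => ∑ i, x.1 i * x.2 i ^ (d + (k : ℕ))))) (w, h)).toLinearMap)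
      = (-1 : ℝ) ^ (d * (d - 1) / 2) * (∏ i, w i) *
          ∏ i, ∏ k ∈ Finset.Ioi i, (h i - h k) ^ 4 := by
  rw [(hasFDerivAt_full d w h).fderiv]
  rw [← LinearMap.det_toMatrix (Bb d), toMatrix_Lfull]
  have hsplit : (Matrix.of fun r c =>
        Sum.elim (fun a => h a ^ exm d r)
          (fun a => w a * ((exm d r : ℝ) * h a ^ (exm d r - 1))) c :
      Matrix (Fin d ⊕ Fin d) (Fin d ⊕ Fin d) ℝ)
      = Matrix.of fun r c => (Sum.elim (fun _ => (1:ℝ)) w c) *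
          (Matrix.of fun r c => Sum.elim (fun a => h a ^ exm d r)
            (fun a => (exm d r : ℝ) * h a ^ (exm d r - 1)) c :
            Matrix (Fin d ⊕ Fin d) (Fin d ⊕ Fin d) ℝ) r c := by
    refine Matrix.ext fun r c => ?_
    cases c <;> simp
  rw [hsplit, Matrix.det_mul_row, det_J0]
  rw [Fintype.prod_sum_type]
  simp only [Sum.elim_inl, Sum.elim_inr, Finset.prod_const_one, one_mul]
  ring
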